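/- Let (V,⊗,I) be a symmetric monoidal closed category and (T,φ,η,μ) a symmetric monoidal monad on V. For every object X of V and every T-algebra (Y,y), the pointwise action p : T[X,Y] → [X,Y] is a T-algebra structure on the internal hom [X,Y]; that is, p ∘ η_{[X,Y]} = 1_{[X,Y]} and p ∘ μ_{[X,Y]} = p ∘ T(p). -/

import Mathlib

open CategoryTheory MonoidalCategory Limits

universe v u

/-- A symmetric monoidal monad on a symmetric monoidal category. -/
structure SymMonoidalMonadStr (C : Type u) [Category.{v} C] [MonoidalCategory C]
    [SymmetricCategory C] (T : Monad C) where
  φ : ∀ A B : C, T.obj A ⊗ T.obj B ⟶ T.obj (A ⊗ B)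
  ε : 𝟙_ C ⟶ T.obj (𝟙_ C)
  φ_natural : ∀ {A B A' B' : C} (f : A ⟶ A') (g : B ⟶ B'),
    (T.map f ⊗ₘ T.map g) ≫ φ A' B' = φ A B ≫ T.map (f ⊗ₘ g)
  φ_assoc : ∀ A B C' : C,
    (φ A B ⊗ₘ 𝟙 (T.obj C')) ≫ φ (A ⊗ B) C' ≫ T.map (α_ A B C').hom
      = (α_ (T.obj A) (T.obj B) (T.obj C')).hom ≫ (𝟙 (T.obj A) ⊗ₘ φ B C') ≫ φ A (B ⊗ C')
  φ_left_unit : ∀ A : C,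
    (λ_ (T.obj A)).hom = (ε ⊗ₘ 𝟙 (T.obj A)) ≫ φ (𝟙_ C) A ≫ T.map (λ_ A).hom
  φ_right_unit : ∀ A : C,
    (ρ_ (T.obj A)).hom = (𝟙 (T.obj A) ⊗ₘ ε) ≫ φ A (𝟙_ C) ≫ T.map (ρ_ A).hom
  φ_braided : ∀ A B : C,
    (β_ (T.obj A) (T.obj B)).hom ≫ φ B A = φ A B ≫ T.map (β_ A B).hom
  η_tensor : ∀ A B : C, (T.η.app A ⊗ₘ T.η.app B) ≫ φ A B = T.η.app (A ⊗ B)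
  η_unit : ε = T.η.app (𝟙_ C)
  μ_tensor : ∀ A B : C,
    φ (T.obj A) (T.obj B) ≫ T.map (φ A B) ≫ T.μ.app (A ⊗ B)
      = (T.μ.app A ⊗ₘ T.μ.app B) ≫ φ A B
  μ_unit : ε ≫ T.map ε ≫ T.μ.app (𝟙_ C) = ε

variable {V : Type u} [Category.{v} V] [MonoidalCategory V] [SymmetricCategory V]
  [MonoidalClosed V]

/-- The right evaluation `[X,Y] ⊗ X ⟶ Y` associated to the internal hom. -/
noncomputable def rev (X Y : V) : (ihom X).obj Y ⊗ X ⟶ Y :=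
  (β_ ((ihom X).obj Y) X).hom ≫ (ihom.ev X).app Y

/-- The adjunct `Z ⟶ [X,Y]` of a morphism `Z ⊗ X ⟶ Y` with respect to right
evaluation: it is the unique map `h` with `(h ⊗ 𝟙) ≫ rev X Y = g`. -/
noncomputable def radj {Z X Y : V} (g : Z ⊗ X ⟶ Y) : Z ⟶ (ihom X).obj Y :=
  MonoidalClosed.curry ((β_ X Z).hom ≫ g)

/-- The pointwise `T`-action on the internal hom `[X,Y]`, for `X` an object of `V` and
`y : TY ⟶ Y` a `T`-algebra structure: the adjunct of
`y ∘ T(rev) ∘ φ ∘ (1 ⊗ η_X) : T[X,Y] ⊗ X ⟶ Y`. -/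
noncomputable def ptAct (T : Monad V) (M : SymMonoidalMonadStr V T) (X Y : V)
    (y : T.obj Y ⟶ Y) : T.obj ((ihom X).obj Y) ⟶ (ihom X).obj Y :=
  radj ((𝟙 (T.obj ((ihom X).obj Y)) ⊗ₘ T.η.app X) ≫ M.φ ((ihom X).obj Y) X
    ≫ T.map (rev X Y) ≫ y)

lemma key {Z X Y : V} (h : Z ⟶ (ihom X).obj Y) :
    (h ⊗ₘ 𝟙 X) ≫ rev X Y = (β_ Z X).hom ≫ MonoidalClosed.uncurry h := by
  rw [MonoidalClosed.uncurry_eq, rev]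
  rw [MonoidalCategory.tensorHom_def]
  simp [whisker_exchange_assoc]

lemma radj_fac {Z X Y : V} (g : Z ⊗ X ⟶ Y) : (radj g ⊗ₘ 𝟙 X) ≫ rev X Y = g := by
  rw [key, radj, MonoidalClosed.uncurry_curry]
  simp

lemma radj_ext {Z X Y : V} (h h' : Z ⟶ (ihom X).obj Y)
    (H : (h ⊗ₘ 𝟙 X) ≫ rev X Y = (h' ⊗ₘ 𝟙 X) ≫ rev X Y) : h = h' := by
  apply MonoidalClosed.uncurry_injective
  rw [key, key] at H
  exact (Iso.cancel_iso_hom_left _ _ _).1 H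

omit [SymmetricCategory V] [MonoidalClosed V] in
lemma tmerge {A B A' B' A'' B'' Z : V} (f : A ⟶ A') (g : B ⟶ B') (f' : A' ⟶ A'')
    (g' : B' ⟶ B'') (h : A'' ⊗ B'' ⟶ Z) :
    (f ⊗ₘ g) ≫ (f' ⊗ₘ g') ≫ h = ((f ≫ f') ⊗ₘ (g ≫ g')) ≫ h := by
  rw [← Category.assoc, tensorHom_comp_tensorHom]

/-- the pointwise action on `[X,Y]` is a `T`-algebra structure. -/
theorem ptAct_isAlgebra (T : Monad V) (M : SymMonoidalMonadStr V T)
    (X : V) (Y : T.Algebra) :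
    T.η.app ((ihom X).obj Y.A) ≫ ptAct T M X Y.A Y.a = 𝟙 ((ihom X).obj Y.A) ∧
    T.μ.app ((ihom X).obj Y.A) ≫ ptAct T M X Y.A Y.a
      = T.map (ptAct T M X Y.A Y.a) ≫ ptAct T M X Y.A Y.a := by
  set W := (ihom X).obj Y.A with hW
  set p := ptAct T M X Y.A Y.a with hp
  have fac : (p ⊗ₘ 𝟙 X) ≫ rev X Y.A
      = (𝟙 (T.obj W) ⊗ₘ T.η.app X) ≫ M.φ W X ≫ T.map (rev X Y.A) ≫ Y.a := radj_fac _
  have split : ∀ (Z : V) (q : Z ⟶ T.obj W), ((q ≫ p) ⊗ₘ 𝟙 X) ≫ rev X Y.A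
      = (q ⊗ₘ 𝟙 X) ≫ (𝟙 (T.obj W) ⊗ₘ T.η.app X) ≫ M.φ W X ≫ T.map (rev X Y.A) ≫ Y.a := by
    intro Z q
    rw [← fac, ← Category.assoc, tensorHom_comp_tensorHom, Category.comp_id]
  constructor
  · apply radj_ext
    rw [split, tmerge, Category.comp_id, Category.id_comp,
      reassoc_of% M.η_tensor W X, ← T.η.naturality_assoc]
    simp [Y.unit]
  · apply radj_ext
    have natφ : (𝟙 (T.obj (T.obj W)) ⊗ₘ T.map (T.η.app X)) ≫ M.φ (T.obj W) (T.obj X)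
        = M.φ (T.obj W) X ≫ T.map (𝟙 (T.obj W) ⊗ₘ T.η.app X) := by
      simpa using M.φ_natural (𝟙 (T.obj W)) (T.η.app X)
    have natφ2 : (T.map p ⊗ₘ 𝟙 (T.obj X)) ≫ M.φ W X
        = M.φ (T.obj W) X ≫ T.map (p ⊗ₘ 𝟙 X) := by
      simpa using M.φ_natural p (𝟙 X)
    have e1 : (T.μ.app W ⊗ₘ T.η.app X)
        = (𝟙 (T.obj (T.obj W)) ⊗ₘ T.η.app X) ≫ (𝟙 (T.obj (T.obj W)) ⊗ₘ T.map (T.η.app X))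
          ≫ (T.μ.app W ⊗ₘ T.μ.app X) := by
      symm
      rw [← Category.assoc, tensorHom_comp_tensorHom, tensorHom_comp_tensorHom]
      simp
    have e2 : (T.map p ⊗ₘ T.η.app X)
        = (𝟙 (T.obj (T.obj W)) ⊗ₘ T.η.app X) ≫ (T.map p ⊗ₘ 𝟙 (T.obj X)) := by
      symm
      rw [tensorHom_comp_tensorHom]
      simp
    have fac2 : T.map (p ⊗ₘ 𝟙 X) ≫ T.map (rev X Y.A)
        = T.map (𝟙 (T.obj W) ⊗ₘ T.η.app X) ≫ T.map (M.φ W X) ≫ T.map (T.map (rev X Y.A))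
          ≫ T.map Y.a := by
      have := congrArg T.map fac
      simpa only [Functor.map_comp, Category.assoc] using this
    rw [split, split]
    conv_lhs => rw [tmerge, Category.comp_id, Category.id_comp, e1]
    simp only [Category.assoc]
    rw [← reassoc_of% M.μ_tensor W X, ← T.μ.naturality_assoc, Y.assoc,
      reassoc_of% natφ]
    conv_rhs => rw [tmerge, Category.comp_id, Category.id_comp, e2]
    simp only [Category.assoc]
    rw [reassoc_of% natφ2, reassoc_of% fac2]
    simp
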